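/- Let M = ℂ[t,t^{-1}]/⟨1⟩ (spanned by u_j, j ∈ ℤ, with u_0 = 0) be the W_1-module with action e_k u_s = s u_{s+k}. Then its A-cover M̂ (the span of all ψ(e_k, u_s) ∈ Hom(A,M), where ψ(e_k,u_s)(t^m) = e_{k+m} u_s) has basis {θ_j : j ∈ ℤ} where θ_j(t^m) = u_{m+j}, satisfying ψ(e_k, u_s) = s θ_{k+s}; moreover the AW_1-module structure on M̂ is given by e_p θ_j = j θ_{j+p} and t^p θ_j = θ_{j+p}. In particular θ_0 ≠ 0, so the A-cover fills in the missing zero weight space of M. -/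

import Mathlib

noncomputable section

def Mbar : Type := (ℤ →₀ ℂ) ⧸ Submodule.span ℂ {Finsupp.single (0 : ℤ) (1 : ℂ)}

instance : AddCommGroup Mbar := inferInstanceAs
  (AddCommGroup ((ℤ →₀ ℂ) ⧸ Submodule.span ℂ {Finsupp.single (0 : ℤ) (1 : ℂ)}))
instance : Module ℂ Mbar := inferInstanceAs
  (Module ℂ ((ℤ →₀ ℂ) ⧸ Submodule.span ℂ {Finsupp.single (0 : ℤ) (1 : ℂ)}))

def uvec (j : ℤ) : Mbar :=
  Submodule.Quotient.mk (Finsupp.single j (1 : ℂ))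

def Emap (p : ℤ) : (ℤ →₀ ℂ) →ₗ[ℂ] (ℤ →₀ ℂ) :=
  Finsupp.lsum ℂ fun s => ((s : ℂ)) • Finsupp.lsingle (s + p)

def EM (p : ℤ) : Mbar →ₗ[ℂ] Mbar :=
  Submodule.mapQ _ _ (Emap p) (by
    rw [Submodule.span_le]
    rintro x rfl
    have h : Emap p (Finsupp.single (0 : ℤ) (1 : ℂ)) = 0 := by
      rw [Emap, Finsupp.lsum_single]
      simp
    simp only [Set.mem_setOf_eq, SetLike.mem_coe, Submodule.mem_comap, h]
    exact Submodule.zero_mem _)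

def theta (j : ℤ) : ℤ → Mbar := fun m => uvec (m + j)

def psiW (k s : ℤ) : ℤ → Mbar := fun m => EM (k + m) (uvec s)

-- helpers
lemma EM_uvec (p s : ℤ) : EM p (uvec s) = (s : ℂ) • uvec (s + p) := by
  show Submodule.mapQ _ _ _ _ (Submodule.Quotient.mk _) = _
  rw [Submodule.mapQ_apply]
  rw [show Emap p (Finsupp.single s 1) = (s:ℂ) • Finsupp.single (s+p) 1 by
    rw [Emap, Finsupp.lsum_single]; simp]
  rfl

def coeff1 : Mbar →ₗ[ℂ] ℂ :=
  Submodule.liftQ _ (Finsupp.lapply 1) (by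
    rw [Submodule.span_le]
    rintro x rfl
    simp only [SetLike.mem_coe, Submodule.mem_comap, Finsupp.lapply_apply, Submodule.mem_bot]
    exact Finsupp.single_eq_of_ne (by decide))

lemma coeff1_uvec (k : ℤ) : coeff1 (uvec k) = if k = 1 then 1 else 0 := by
  show Submodule.liftQ _ _ _ (Submodule.Quotient.mk _) = _
  rw [Submodule.liftQ_apply]
  simp [Finsupp.single_apply]

lemma uvec_zero : uvec 0 = 0 := by
  rw [uvec]; refine (Submodule.Quotient.mk_eq_zero _).mpr ?_
  exact Submodule.mem_span_singleton_self _

/-- The `A`-cover of `M = ℂ[t,t⁻¹]/⟨1⟩` has basis `{θ_j}`, with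
`ψ(e_k, u_s) = s θ_{k+s}`; the `AW_1`-module structure on the cover is
`e_p θ_j = j θ_{j+p}` (the coinduced action `(e_p φ)(t^m) = e_p(φ(t^m)) - m φ(t^{m+p})`)
and `t^p θ_j = θ_{j+p}` (the coinduced action `(t^p φ)(t^m) = φ(t^{m+p})`).
In particular `θ_0 ≠ 0`: the cover fills in the missing zero weight space of `M`. -/
theorem cover_of_functions_mod_constants :
    (∀ k s : ℤ, psiW k s = (s : ℂ) • theta (k + s)) ∧
      LinearIndependent ℂ theta ∧
      Submodule.span ℂ (Set.range theta)
        = Submodule.span ℂ {φ : ℤ → Mbar | ∃ k s : ℤ, φ = psiW k s} ∧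
      (∀ p j : ℤ, (fun m : ℤ => EM p (theta j m) - (m : ℂ) • theta j (m + p))
        = (j : ℂ) • theta (j + p)) ∧
      (∀ p j : ℤ, (fun m : ℤ => theta j (m + p)) = theta (j + p)) ∧
      theta 0 ≠ 0 := by
  have hpsi : ∀ k s : ℤ, psiW k s = (s : ℂ) • theta (k + s) := by
    intro k s
    funext m
    simp only [psiW, theta, EM_uvec, Pi.smul_apply]
    congr 1
    ring
  refine ⟨hpsi, ?_, ?_, ?_, ?_, ?_⟩
  · rw [linearIndependent_iff]
    intro l hl
    ext j
    have h2 : coeff1 ((Finsupp.linearCombination ℂ theta l) (1 - j)) = 0 := by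
      rw [hl]; simp
    rw [Finsupp.linearCombination_apply, Finsupp.sum_apply', map_finsuppSum] at h2
    simp only [Pi.smul_apply, map_smul, theta, coeff1_uvec, smul_eq_mul] at h2
    have key : ∀ i : ℤ, ∀ a : ℂ, a * (if 1 - j + i = 1 then (1:ℂ) else 0)
        = if i = j then a else 0 := by
      intro i a
      rcases eq_or_ne i j with rfl | hij
      · simp
      · rw [if_neg (by omega), if_neg hij, mul_zero]
    simp only [key] at h2
    rw [Finsupp.sum_ite_eq' l j (fun _ a => a)] at h2
    by_cases hj : j ∈ l.support
    · simpa [hj] using h2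
    · simpa using Finsupp.notMem_support_iff.mp hj
  · apply le_antisymm <;> rw [Submodule.span_le]
    · rintro _ ⟨j, rfl⟩
      have : theta j = psiW (j - 1) 1 := by
        rw [hpsi]; simp
      rw [this]
      exact Submodule.subset_span ⟨j - 1, 1, rfl⟩
    · rintro φ ⟨k, s, rfl⟩
      rw [hpsi]
      exact Submodule.smul_mem _ _ (Submodule.subset_span ⟨k + s, rfl⟩)
  · intro p j
    funext m
    simp only [theta, EM_uvec, Pi.smul_apply]
    rw [show m + j + p = m + (j + p) by ring, show m + p + j = m + (j + p) by ring,
      ← sub_smul]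
    congr 1
    push_cast
    ring
  · intro p j
    funext m
    simp only [theta]
    congr 1
    ring
  · intro h
    have := congrFun h 1
    simp only [theta, Pi.zero_apply] at this
    have h2 := congrArg coeff1 this
    rw [coeff1_uvec] at h2
    simp at h2

end
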